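/- In the setting of the coKähler extension, the almost complex structure J(X,a) = (ΦX - aξ, η(X)) on g = h ⋊_D ℝ satisfies J² = -id and has vanishing Nijenhuis tensor, using that Φξ=0, η∘Φ=0, Nij_Φ = 0, dη = 0, Dξ = 0, Dη = 0, and DΦ = ΦD. -/
import Mathlib


/-- In the coKähler extension `g = h ⋊_D ℝ`, the almost complex structure
`J(X,a) = (ΦX - aξ, η(X))` satisfies `J² = -id` and has vanishing Nijenhuis
tensor, using `Φξ = 0`, `η∘Φ = 0`, `Nij_Φ = 0`, `dη = 0`, `Dξ = 0`, `Dη = 0`,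
`DΦ = ΦD`. -/
theorem stmt13 (H : Type*) [LieRing H] [LieAlgebra ℝ H]
    (η : H →ₗ[ℝ] ℝ) (ξ : H) (Φ : H →ₗ[ℝ] H) (D : H →ₗ[ℝ] H)
    (hηξ : η ξ = 1)
    (hΦ2 : ∀ x : H, Φ (Φ x) = -x + η x • ξ)
    (hΦξ : Φ ξ = 0) (hηΦ : ∀ x : H, η (Φ x) = 0)
    (hNijΦ : ∀ x y : H,
      Φ (Φ ⁅x, y⁆) + ⁅Φ x, Φ y⁆ - Φ ⁅Φ x, y⁆ - Φ ⁅x, Φ y⁆ = 0)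
    (hdη : ∀ x y : H, η ⁅x, y⁆ = 0)
    (hD : ∀ x y : H, D ⁅x, y⁆ = ⁅D x, y⁆ + ⁅x, D y⁆)
    (hDξ : D ξ = 0) (hDη : ∀ x : H, η (D x) = 0)
    (hDΦ : ∀ x : H, D (Φ x) = Φ (D x))
    (br : H × ℝ → H × ℝ → H × ℝ)
    (hbr : ∀ u v : H × ℝ, br u v = (⁅u.1, v.1⁆ + u.2 • D v.1 - v.2 • D u.1, 0))
    (J : H × ℝ → H × ℝ)
    (hJ : ∀ u : H × ℝ, J u = (Φ u.1 - u.2 • ξ, η u.1)) :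
    (∀ u : H × ℝ, J (J u) = -u) ∧
    (∀ u v : H × ℝ,
      -(br u v) + br (J u) (J v) - J (br (J u) v) - J (br u (J v)) = 0) := by
  -- `Φ` commutes with `ad ξ`, a consequence of `Nij_Φ = 0`, `Φξ = 0`, `dη = 0`.
  have hΦ2' : ∀ x : H, η x = 0 → Φ (Φ x) = -x := by
    intro x hx; rw [hΦ2, hx, zero_smul, add_zero]
  have hc : ∀ z : H, Φ ⁅ξ, z⁆ = ⁅ξ, Φ z⁆ := by
    intro z
    have key := hNijΦ ξ z
    rw [hΦξ, zero_lie, zero_lie, map_zero] at key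
    -- key : Φ (Φ ⁅ξ, z⁆) + 0 - 0 - Φ ⁅ξ, Φ z⁆ = 0
    have h1 : Φ (Φ ⁅ξ, z⁆) = Φ ⁅ξ, Φ z⁆ := by linear_combination (norm := module) key
    have h2 := congrArg Φ h1
    rw [hΦ2' _ (hdη _ _), hΦ2' _ (hdη _ _)] at h2
    have h3 : -Φ ⁅z, ξ⁆ = ⁅ξ, Φ z⁆ := by simpa using congrArg Neg.neg h2
    rw [← lie_skew ξ z, map_neg]
    exact h3
  constructor
  · intro u
    simp only [hJ, map_sub, map_smul, hΦ2, hΦξ, hηΦ, hηξ, smul_zero, smul_eq_mul, mul_one]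
    ext <;> simp
  · intro u v
    obtain ⟨x, a⟩ := u
    obtain ⟨y, b⟩ := v
    simp only [hJ, hbr, map_sub, map_add, map_smul, hΦξ, hηΦ, hdη, hDη, hDΦ, hDξ,
      smul_zero, sub_zero, zero_smul, smul_eq_mul, mul_zero, zero_sub, map_neg]
    ext
    · simp only [Prod.fst_add, Prod.fst_sub, Prod.fst_neg, Prod.fst_zero]
      simp only [lie_sub, sub_lie, lie_smul, smul_lie, lie_self, smul_zero, sub_zero,
        map_sub, map_add, map_smul, map_neg, smul_neg]
      have h1 : Φ ⁅Φ x, y⁆ + Φ ⁅x, Φ y⁆ - ⁅Φ x, Φ y⁆ = -⁅x, y⁆ := by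
        have key := hNijΦ x y
        rw [hΦ2' _ (hdη _ _)] at key
        linear_combination (norm := module) -key
      have hc1 : Φ ⁅ξ, y⁆ = ⁅ξ, Φ y⁆ := hc y
      have hc2 : Φ ⁅x, ξ⁆ = ⁅Φ x, ξ⁆ := by
        rw [← lie_skew x ξ, map_neg, hc, lie_skew]
      have hd2 : Φ (Φ (D x)) = -D x := hΦ2' _ (hDη x)
      have hd3 : Φ (Φ (D y)) = -D y := hΦ2' _ (hDη y)
      linear_combination (norm := module) -h1 + a • hc1 + b • hc2 + b • hd2 - a • hd3
    · simp only [Prod.snd_add, Prod.snd_sub, Prod.snd_neg, Prod.snd_zero]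
      simp [hdη, hDη, hηΦ, hηξ]
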